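/- Let q ≥ 2 and n ≥ 1 be integers and let Φ_n be the spherical function. Then for every λ ∈ [−2√q, 2√q], |Φ_n'(λ)| ≤ (n² q^{−n/2} / (2√q (q+1))) · (2 + (n+1)(q−1)). -/

import Mathlib

open Set Real

open Polynomial Polynomial.Chebyshev in
lemma cheb_U_add_two_eq (n : ℤ) : U ℝ (n + 2) = U ℝ n + 2 * T ℝ (n + 2) := by
  have h1 := U_add_two ℝ n
  have h2 := U_eq_X_mul_U_add_T ℝ (n + 1)
  rw [show n + 1 + 1 = n + 2 by ring] at h2
  -- from h2 : U (n+2) = X * U (n+1) + T (n+2), so X * U (n+1) = U (n+2) - T (n+2)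
  have h3 : (X : ℝ[X]) * U ℝ (n + 1) = U ℝ (n + 2) - T ℝ (n + 2) := by
    rw [h2]; ring
  have h4 : U ℝ (n + 2) = 2 * (U ℝ (n + 2) - T ℝ (n + 2)) - U ℝ n := by
    rw [← h3]; rw [h1]; ring
  linear_combination -h4

open Polynomial Polynomial.Chebyshev in
lemma cheb_T_bound (n : ℤ) {x : ℝ} (hx : x ∈ Icc (-1:ℝ) 1) :
    |(T ℝ n).eval x| ≤ 1 := by
  have hc : Real.cos (Real.arccos x) = x := Real.cos_arccos hx.1 hx.2
  rw [← hc, T_real_cos]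
  exact Real.abs_cos_le_one _

open Polynomial Polynomial.Chebyshev in
lemma cheb_U_bound (n : ℕ) {x : ℝ} (hx : x ∈ Icc (-1:ℝ) 1) :
    |(U ℝ (n:ℤ)).eval x| ≤ (n:ℝ) + 1 := by
  induction n using Nat.twoStepInduction with
  | zero => simp [U_zero]
  | one =>
      simp only [Nat.cast_one, U_one]
      have h1 : |x| ≤ 1 := abs_le.2 ⟨hx.1, hx.2⟩
      have h2x : Polynomial.eval x (2 * Polynomial.X : ℝ[X]) = 2 * x := by simp
      rw [h2x, abs_mul, abs_two]
      nlinarith [abs_nonneg x]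
  | more n ih _ =>
      have key : (U ℝ ((n:ℤ) + 2)) = U ℝ (n:ℤ) + 2 * T ℝ ((n:ℤ) + 2) :=
        cheb_U_add_two_eq n
      have : ((n + 2 : ℕ) : ℤ) = (n:ℤ) + 2 := by push_cast; ring
      rw [this, key]
      simp only [Polynomial.eval_add, Polynomial.eval_mul, Polynomial.eval_ofNat]
      have hT := cheb_T_bound ((n:ℤ) + 2) hx
      calc |(U ℝ (n:ℤ)).eval x + 2 * (T ℝ ((n:ℤ)+2)).eval x|
          ≤ |(U ℝ (n:ℤ)).eval x| + |2 * (T ℝ ((n:ℤ)+2)).eval x| := abs_add_le _ _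
        _ ≤ ((n:ℝ) + 1) + 2 * 1 :=
            add_le_add ih (by
              rw [abs_mul, abs_two]
              exact mul_le_mul_of_nonneg_left hT (by norm_num))
        _ = ((n:ℕ) + 2 : ℕ) + 1 := by push_cast; ring

open Polynomial Polynomial.Chebyshev in
lemma cheb_T_deriv_bound (n : ℕ) {x : ℝ} (hx : x ∈ Icc (-1:ℝ) 1) :
    |(derivative (T ℝ (n:ℤ))).eval x| ≤ (n:ℝ)^2 := by
  rw [T_derivative_eq_U]
  cases n with
  | zero => simp
  | succ m =>
      have : ((m + 1 : ℕ) : ℤ) - 1 = (m : ℤ) := by push_cast; ring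
      rw [this]
      simp only [Polynomial.eval_mul, Polynomial.eval_intCast, abs_mul]
      have hU := cheb_U_bound m hx
      have h1 : |((((m:ℕ)+1 : ℕ) : ℤ) : ℝ)| = (m:ℝ) + 1 := by
        push_cast; rw [abs_of_nonneg]; positivity
      calc |(((((m:ℕ)+1 : ℕ) : ℤ) : ℝ))| * |(U ℝ (m:ℤ)).eval x|
          ≤ ((m:ℝ) + 1) * ((m:ℝ) + 1) := by rw [h1]; gcongr
        _ = (((m:ℕ)+1 : ℕ) : ℝ)^2 := by push_cast; ring

open Polynomial Polynomial.Chebyshev in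
lemma cheb_U_deriv_bound (n : ℕ) {x : ℝ} (hx : x ∈ Icc (-1:ℝ) 1) :
    |(derivative (U ℝ (n:ℤ))).eval x| ≤ ((n:ℝ) + 1) * (n:ℝ)^2 := by
  induction n using Nat.twoStepInduction with
  | zero => simp [U_zero]
  | one =>
      simp only [Nat.cast_one, U_one]
      have hd : Polynomial.eval x (derivative (2 * Polynomial.X : ℝ[X])) = 2 := by
        simp [derivative_mul]
      rw [hd]
      norm_num
  | more n ih _ =>
      have key : (U ℝ ((n:ℤ) + 2)) = U ℝ (n:ℤ) + 2 * T ℝ ((n:ℤ) + 2) :=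
        cheb_U_add_two_eq n
      have hc : ((n + 2 : ℕ) : ℤ) = (n:ℤ) + 2 := by push_cast; ring
      rw [hc, key]
      rw [derivative_add, derivative_mul, T_derivative_eq_U]
      simp only [Polynomial.eval_add, Polynomial.eval_mul, derivative_ofNat,
        Polynomial.eval_zero, zero_mul, zero_add, Polynomial.eval_ofNat,
        Polynomial.eval_intCast]
      have hc2 : ((n:ℤ) + 2) - 1 = ((n + 1 : ℕ) : ℤ) := by push_cast; ring
      rw [hc2]
      have hU := cheb_U_bound (n+1) hx
      have habs : |(((n:ℤ) + 2 : ℤ) : ℝ)| = (n:ℝ) + 2 := by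
        push_cast; rw [abs_of_nonneg]; positivity
      calc |(derivative (U ℝ (n:ℤ))).eval x +
              2 * ((((n:ℤ) + 2 : ℤ) : ℝ) * (U ℝ ((n+1 : ℕ):ℤ)).eval x)|
          ≤ |(derivative (U ℝ (n:ℤ))).eval x| +
              |2 * ((((n:ℤ) + 2 : ℤ) : ℝ) * (U ℝ ((n+1 : ℕ):ℤ)).eval x)| := abs_add_le _ _
        _ ≤ ((n:ℝ) + 1) * (n:ℝ)^2 + 2 * (((n:ℝ) + 2) * (((n:ℝ)+1) + 1)) :=
            add_le_add ih (by
              rw [abs_mul, abs_two, abs_mul, habs]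
              gcongr
              calc |(U ℝ ((n+1 : ℕ):ℤ)).eval x| ≤ ((n+1 : ℕ):ℝ) + 1 := hU
                _ = ((n:ℝ) + 1) + 1 := by push_cast; ring)
        _ ≤ (((n + 2 : ℕ):ℝ) + 1) * ((n + 2 : ℕ):ℝ)^2 := by push_cast; nlinarith [sq_nonneg ((n:ℝ))]

/-- The spherical function of the `(q+1)`-regular tree:
`Φ_n(λ) = q^{−n/2}( (2/(q+1)) T_n(λ/(2√q)) + ((q−1)/(q+1)) U_n(λ/(2√q)) )`. -/
noncomputable def Phi (q n : ℕ) (l : ℝ) : ℝ :=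
  (q:ℝ) ^ (-(n:ℝ)/2) *
    ((2/((q:ℝ)+1)) * (Polynomial.Chebyshev.T ℝ (n:ℤ)).eval (l/(2*Real.sqrt q))
      + (((q:ℝ)-1)/((q:ℝ)+1)) * (Polynomial.Chebyshev.U ℝ (n:ℤ)).eval (l/(2*Real.sqrt q)))

/-- For `q ≥ 2`, `n ≥ 1` and `λ ∈ [−2√q, 2√q]`,
`|Φ_n'(λ)| ≤ (n² q^{−n/2} / (2√q (q+1))) (2 + (n+1)(q−1))`. -/
theorem Phi_deriv_bound (q n : ℕ) (hq : 2 ≤ q) (hn : 1 ≤ n) :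
    ∀ l ∈ Icc (-(2*Real.sqrt q)) (2*Real.sqrt q),
      |deriv (Phi q n) l| ≤
        (n:ℝ)^2 * (q:ℝ) ^ (-(n:ℝ)/2) / (2*Real.sqrt q * ((q:ℝ)+1)) *
          (2 + ((n:ℝ)+1)*((q:ℝ)-1)) := by
  intro l hl
  set Q : ℝ := (q:ℝ) with hQ
  have hQ2 : (2:ℝ) ≤ Q := by rw [hQ]; exact_mod_cast hq
  have hQ0 : 0 < Q := by linarith
  have hs : 0 < 2 * Real.sqrt Q := by positivity
  set s : ℝ := 2 * Real.sqrt Q with hsdef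
  set c : ℝ := Q ^ (-(n:ℝ)/2) with hcdef
  have hc0 : 0 < c := Real.rpow_pos_of_pos hQ0 _
  set x : ℝ := l / s with hxdef
  have hx : x ∈ Icc (-1:ℝ) 1 := by
    constructor
    · rw [hxdef, le_div_iff₀ hs]; linarith [hl.1]
    · rw [hxdef, div_le_one hs]; exact hl.2
  -- derivative computation
  set Tp := Polynomial.Chebyshev.T ℝ (n:ℤ) with hTp
  set Up := Polynomial.Chebyshev.U ℝ (n:ℤ) with hUp
  have hdiv : HasDerivAt (fun t : ℝ => t / s) (1 / s) l := by
    simpa using (hasDerivAt_id l).div_const s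
  have hT : HasDerivAt (fun t : ℝ => Tp.eval (t / s))
      ((Polynomial.derivative Tp).eval x * (1 / s)) l :=
    by rw [hxdef]; exact (Tp.hasDerivAt (l / s)).comp l hdiv
  have hU : HasDerivAt (fun t : ℝ => Up.eval (t / s))
      ((Polynomial.derivative Up).eval x * (1 / s)) l :=
    by rw [hxdef]; exact (Up.hasDerivAt (l / s)).comp l hdiv
  have hPhi : HasDerivAt (Phi q n)
      (c * ((2/(Q+1)) * ((Polynomial.derivative Tp).eval x * (1 / s))
        + ((Q-1)/(Q+1)) * ((Polynomial.derivative Up).eval x * (1 / s)))) l := by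
    have := ((hT.const_mul (2/(Q+1))).add (hU.const_mul ((Q-1)/(Q+1)))).const_mul c
    convert this using 1
    all_goals rfl
  rw [hPhi.deriv]
  have hTb := cheb_T_deriv_bound n hx
  have hUb := cheb_U_deriv_bound n hx
  rw [← hTp] at hTb
  rw [← hUp] at hUb
  have ha : (0:ℝ) ≤ 2/(Q+1) := by positivity
  have hb : (0:ℝ) ≤ (Q-1)/(Q+1) := by
    apply div_nonneg <;> linarith
  have habs : |c * ((2/(Q+1)) * ((Polynomial.derivative Tp).eval x * (1 / s))
        + ((Q-1)/(Q+1)) * ((Polynomial.derivative Up).eval x * (1 / s)))|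
      ≤ c * ((2/(Q+1)) * ((n:ℝ)^2 * (1 / s))
        + ((Q-1)/(Q+1)) * ((((n:ℝ)+1) * (n:ℝ)^2) * (1 / s))) := by
    rw [abs_mul, abs_of_pos hc0]
    gcongr
    calc |(2/(Q+1)) * ((Polynomial.derivative Tp).eval x * (1 / s))
            + ((Q-1)/(Q+1)) * ((Polynomial.derivative Up).eval x * (1 / s))|
        ≤ |(2/(Q+1)) * ((Polynomial.derivative Tp).eval x * (1 / s))|
            + |((Q-1)/(Q+1)) * ((Polynomial.derivative Up).eval x * (1 / s))| := abs_add_le _ _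
      _ ≤ (2/(Q+1)) * ((n:ℝ)^2 * (1 / s))
            + ((Q-1)/(Q+1)) * ((((n:ℝ)+1) * (n:ℝ)^2) * (1 / s)) := by
          rw [abs_mul, abs_mul, abs_mul, abs_mul]
          rw [abs_of_nonneg ha, abs_of_nonneg hb,
            abs_of_nonneg (le_of_lt (by positivity : (0:ℝ) < 1/s))]
          gcongr
  refine habs.trans (le_of_eq ?_)
  have hs0 : s ≠ 0 := ne_of_gt hs
  have hQ1 : Q + 1 ≠ 0 := by positivity
  field_simp
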